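/- Let N ≥ 1 be an integer and s ∈ (0,1) with N > 2s. Then there exists a constant C > 0 (depending only on N and s) such that for every d ≥ 2, ∫_{ℝ^N ∖ B_d(0)} ∫_{B_d(0)} [ (1+|x|^{N+2s}) (1+|y|^{N+2s}) ( |x|^{N+2s} − |y|^{N+2s} ) ]^{−1} dy dx ≤ C d^{−(N+4s)}. -/

import Mathlib

open MeasureTheory Metric Set
open scoped ENNReal NNReal

lemma lintegral_Ioi_rpow' {q : ℝ} (hq : q < -1) {c : ℝ} (hc : 0 < c) :
    ∫⁻ r in Ioi c, ENNReal.ofReal (r ^ q) = ENNReal.ofReal (-c ^ (q + 1) / (q + 1)) := by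
  rw [← integral_Ioi_rpow_of_lt hq hc]
  refine (ofReal_integral_eq_lintegral_ofReal (integrableOn_Ioi_rpow_of_lt hq hc) ?_).symm
  filter_upwards [ae_restrict_mem measurableSet_Ioi] with r hr
  exact Real.rpow_nonneg (hc.trans hr).le q

lemma lintegral_sqrt_inv {c e : ℝ} (hc : 0 ≤ c) :
    ∫⁻ r in Ioc e (e + c), ENNReal.ofReal (((r - e) ^ ((1:ℝ)/2))⁻¹) =
      ENNReal.ofReal (2 * c ^ ((1:ℝ)/2)) := by
  have hle : e ≤ e + c := by linarith
  have hint' : IntervalIntegrable (fun r : ℝ => (r - e) ^ (-((1:ℝ)/2))) volume (0 + e) (c + e) :=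
    (intervalIntegral.intervalIntegrable_rpow' (by norm_num)).comp_sub_right e
  rw [zero_add] at hint'
  have hint : IntegrableOn (fun r : ℝ => (r - e) ^ (-((1:ℝ)/2))) (Ioc e (e + c)) volume := by
    have := (intervalIntegrable_iff_integrableOn_Ioc_of_le (by linarith : e ≤ c + e)).1 hint'
    rwa [add_comm c e] at this
  have hcongr : ∫⁻ r in Ioc e (e + c), ENNReal.ofReal (((r - e) ^ ((1:ℝ)/2))⁻¹) =
      ∫⁻ r in Ioc e (e + c), ENNReal.ofReal ((r - e) ^ (-((1:ℝ)/2))) :=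
    setLIntegral_congr_fun measurableSet_Ioc ((fun r hr => by
      rw [Real.rpow_neg (by linarith [hr.1] : (0:ℝ) ≤ r - e)]))
  rw [hcongr, ← ofReal_integral_eq_lintegral_ofReal hint ?_]
  · congr 1
    rw [← intervalIntegral.integral_of_le hle,
      intervalIntegral.integral_comp_sub_right (fun u : ℝ => u ^ (-((1:ℝ)/2))) e]
    have h0 : e - e = (0:ℝ) := by ring
    have h1 : e + c - e = c := by ring
    rw [h0, h1, integral_rpow (Or.inl (by norm_num))]
    have h2 : -((1:ℝ)/2) + 1 = 1/2 := by norm_num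
    rw [h2, Real.zero_rpow (by norm_num)]
    ring
  · filter_upwards [ae_restrict_mem measurableSet_Ioc] with r hr
    exact Real.rpow_nonneg (by linarith [hr.1]) _

lemma lintegral_sqrt_inv_left {c e : ℝ} (hc : 0 ≤ c) :
    ∫⁻ t in Ioc (e - c) e, ENNReal.ofReal (((e - t) ^ ((1:ℝ)/2))⁻¹) =
      ENNReal.ofReal (2 * c ^ ((1:ℝ)/2)) := by
  have hle : e - c ≤ e := by linarith
  have hint' : IntervalIntegrable (fun r : ℝ => (e - r) ^ (-((1:ℝ)/2))) volume (e - 0) (e - c) :=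
    (intervalIntegral.intervalIntegrable_rpow' (by norm_num)).comp_sub_left e
  have hint : IntegrableOn (fun r : ℝ => (e - r) ^ (-((1:ℝ)/2))) (Ioc (e - c) e) volume := by
    have h2 := hint'.symm
    rw [sub_zero] at h2
    exact (intervalIntegrable_iff_integrableOn_Ioc_of_le hle).1 h2
  have hcongr : ∫⁻ t in Ioc (e - c) e, ENNReal.ofReal (((e - t) ^ ((1:ℝ)/2))⁻¹) =
      ∫⁻ t in Ioc (e - c) e, ENNReal.ofReal ((e - t) ^ (-((1:ℝ)/2))) :=
    setLIntegral_congr_fun measurableSet_Ioc ((fun r hr => by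
      rw [Real.rpow_neg (by linarith [hr.2] : (0:ℝ) ≤ e - r)]))
  rw [hcongr, ← ofReal_integral_eq_lintegral_ofReal hint ?_]
  · congr 1
    rw [← intervalIntegral.integral_of_le hle,
      intervalIntegral.integral_comp_sub_left (fun u : ℝ => u ^ (-((1:ℝ)/2))) e]
    have h0 : e - e = (0:ℝ) := by ring
    have h1 : e - (e - c) = c := by ring
    rw [h0, h1, integral_rpow (Or.inl (by norm_num))]
    have h2 : -((1:ℝ)/2) + 1 = 1/2 := by norm_num
    rw [h2, Real.zero_rpow (by norm_num)]
    ring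
  · filter_upwards [ae_restrict_mem measurableSet_Ioc] with r hr
    exact Real.rpow_nonneg (by linarith [hr.2]) _

section
variable (N : ℕ) {s α d : ℝ}

-- auxiliary real facts
lemma half_pow_inv_le {d : ℝ} (hd : 2 ≤ d) :
    ((d/2) ^ ((1:ℝ)/2))⁻¹ ≤ 2 * d ^ (-((1:ℝ)/2)) := by
  have hd0 : (0:ℝ) < d := by linarith
  rw [← Real.rpow_neg (by linarith : (0:ℝ) ≤ d/2)]
  have h1 : ((d/2:ℝ)) ^ (-((1:ℝ)/2)) = d ^ (-((1:ℝ)/2)) * (2:ℝ) ^ ((1:ℝ)/2) := by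
    rw [div_eq_mul_inv, Real.mul_rpow hd0.le (by norm_num),
      Real.inv_rpow (by norm_num : (0:ℝ) ≤ 2), ← Real.rpow_neg (by norm_num : (0:ℝ) ≤ 2),
      neg_neg]
  rw [h1, mul_comm]
  have h2 : (2:ℝ) ^ ((1:ℝ)/2) ≤ 2 := by
    have := Real.rpow_le_rpow_of_exponent_le (by norm_num : (1:ℝ) ≤ 2)
      (by norm_num : (1:ℝ)/2 ≤ 1)
    rwa [Real.rpow_one] at this
  exact mul_le_mul_of_nonneg_right h2 (Real.rpow_nonneg hd0.le _)

end

lemma Pbound (N : ℕ) (hN : 1 ≤ N) {s α : ℝ} (hs0 : 0 < s) (hα : α = N + 2*s)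
    {d : ℝ} (hd : 2 ≤ d) :
    ∫⁻ t in Ioi (0:ℝ), ENNReal.ofReal (t ^ (N - 1)) *
        (if t < d then ENNReal.ofReal (((1 + t ^ α) * (d - t) ^ ((1:ℝ)/2))⁻¹) else 0) ≤
      ENNReal.ofReal ((2 + 1/s + 2 ^ (α + 1)) * d ^ (-((1:ℝ)/2))) := by
  have hd0 : (0:ℝ) < d := by linarith
  have hd1 : (1:ℝ) ≤ d := by linarith
  have hdh : (1:ℝ) ≤ d/2 := by linarith
  have hNr : (1:ℝ) ≤ (N:ℝ) := by exact_mod_cast hN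
  have hα1 : (1:ℝ) ≤ α := by rw [hα]; linarith
  have hα0 : (0:ℝ) ≤ α := by linarith
  set g : ℝ → ℝ≥0∞ := fun t => ENNReal.ofReal (t ^ (N - 1)) *
      (if t < d then ENNReal.ofReal (((1 + t ^ α) * (d - t) ^ ((1:ℝ)/2))⁻¹) else 0) with hg
  have hsplit1 : Ioi (0:ℝ) = Ioc 0 d ∪ Ioi d := (Ioc_union_Ioi_eq_Ioi hd0.le).symm
  have hsplit2 : Ioc (0:ℝ) d = Ioc 0 (d/2) ∪ Ioc (d/2) d :=
    (Ioc_union_Ioc_eq_Ioc (by linarith) (by linarith)).symm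
  have hsplit3 : Ioc (0:ℝ) (d/2) = Ioc 0 1 ∪ Ioc 1 (d/2) :=
    (Ioc_union_Ioc_eq_Ioc (by norm_num) hdh).symm
  have hdisj1 : Disjoint (Ioc (0:ℝ) d) (Ioi d) := by
    rw [Set.disjoint_left]; rintro x ⟨_, h1⟩ h2; exact absurd h2 (not_lt.2 h1)
  rw [hsplit1, lintegral_union measurableSet_Ioi hdisj1, hsplit2,
    lintegral_union measurableSet_Ioc (Ioc_disjoint_Ioc_of_le le_rfl), hsplit3,
    lintegral_union measurableSet_Ioc (Ioc_disjoint_Ioc_of_le le_rfl)]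
  -- last piece is zero
  have hz : ∫⁻ t in Ioi d, g t = 0 := by
    have : ∫⁻ t in Ioi d, g t = ∫⁻ t in Ioi d, 0 := by
      refine setLIntegral_congr_fun measurableSet_Ioi (fun t ht => ?_)
      simp only [hg, if_neg (not_lt.2 (le_of_lt (show d < t from ht))), mul_zero]
    rw [this, lintegral_zero]
  -- piece on Ioc 0 1
  have hB1 : ∫⁻ t in Ioc (0:ℝ) 1, g t ≤ ENNReal.ofReal (2 * d ^ (-((1:ℝ)/2))) := by
    have pw : ∀ t ∈ Ioc (0:ℝ) 1, g t ≤ ENNReal.ofReal (2 * d ^ (-((1:ℝ)/2))) := by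
      intro t ht
      have ht0 : (0:ℝ) < t := ht.1
      have htd : t < d := by linarith [ht.2]
      simp only [hg, if_pos htd]
      rw [← ENNReal.ofReal_mul (by positivity : (0:ℝ) ≤ t ^ (N - 1))]
      apply ENNReal.ofReal_le_ofReal
      have hdt : (0:ℝ) ≤ d - t := by linarith [ht.2]
      have e1 : (d/2) ^ ((1:ℝ)/2) ≤ (1 + t ^ α) * (d - t) ^ ((1:ℝ)/2) := by
        have h1 : ((d/2:ℝ)) ^ ((1:ℝ)/2) ≤ (d - t) ^ ((1:ℝ)/2) :=
          Real.rpow_le_rpow (by linarith) (by linarith [ht.2]) (by norm_num)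
        nlinarith [Real.rpow_nonneg hdt ((1:ℝ)/2), Real.rpow_nonneg ht0.le α]
      have e2 : ((1 + t ^ α) * (d - t) ^ ((1:ℝ)/2))⁻¹ ≤ ((d/2) ^ ((1:ℝ)/2))⁻¹ :=
        inv_anti₀ (by positivity) e1
      have e3 : t ^ (N - 1) ≤ 1 := pow_le_one₀ ht0.le ht.2
      calc t ^ (N - 1) * ((1 + t ^ α) * (d - t) ^ ((1:ℝ)/2))⁻¹
          ≤ 1 * ((d/2) ^ ((1:ℝ)/2))⁻¹ := by
            apply mul_le_mul e3 e2 (by positivity) (by norm_num)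
        _ = ((d/2) ^ ((1:ℝ)/2))⁻¹ := one_mul _
        _ ≤ 2 * d ^ (-((1:ℝ)/2)) := half_pow_inv_le hd
    calc ∫⁻ t in Ioc (0:ℝ) 1, g t
        ≤ ∫⁻ _ in Ioc (0:ℝ) 1, ENNReal.ofReal (2 * d ^ (-((1:ℝ)/2))) :=
          setLIntegral_mono measurable_const pw
      _ = ENNReal.ofReal (2 * d ^ (-((1:ℝ)/2))) * volume (Ioc (0:ℝ) 1) :=
          setLIntegral_const _ _
      _ ≤ ENNReal.ofReal (2 * d ^ (-((1:ℝ)/2))) := by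
          rw [Real.volume_Ioc]
          norm_num
  -- piece on Ioc 1 (d/2)
  have hB2 : ∫⁻ t in Ioc (1:ℝ) (d/2), g t ≤ ENNReal.ofReal ((1/s) * d ^ (-((1:ℝ)/2))) := by
    have pw : ∀ t ∈ Ioc (1:ℝ) (d/2), g t ≤
        ENNReal.ofReal (2 * d ^ (-((1:ℝ)/2))) * ENNReal.ofReal (t ^ (-1 - 2*s)) := by
      intro t ht
      have ht1 : (1:ℝ) < t := ht.1
      have ht0 : (0:ℝ) < t := by linarith
      have htd : t < d := by linarith [ht.2]
      have hdt2 : d/2 ≤ d - t := by linarith [ht.2]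
      simp only [hg, if_pos htd]
      rw [← ENNReal.ofReal_mul (by positivity : (0:ℝ) ≤ t ^ (N - 1)),
        ← ENNReal.ofReal_mul (by positivity : (0:ℝ) ≤ 2 * d ^ (-((1:ℝ)/2)))]
      apply ENNReal.ofReal_le_ofReal
      have ecast : (t:ℝ) ^ (N - 1) = t ^ ((N:ℝ) - 1) := by
        rw [← Real.rpow_natCast t (N - 1), Nat.cast_sub hN, Nat.cast_one]
      have e1 : t ^ α * (d/2) ^ ((1:ℝ)/2) ≤ (1 + t ^ α) * (d - t) ^ ((1:ℝ)/2) := by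
        apply mul_le_mul (by nlinarith [Real.rpow_nonneg ht0.le α])
          (Real.rpow_le_rpow (by linarith) hdt2 (by norm_num))
          (Real.rpow_nonneg (by linarith) _) (by positivity)
      have e2 : ((1 + t ^ α) * (d - t) ^ ((1:ℝ)/2))⁻¹ ≤ (t ^ α * (d/2) ^ ((1:ℝ)/2))⁻¹ :=
        inv_anti₀ (by positivity) e1
      calc t ^ (N - 1) * ((1 + t ^ α) * (d - t) ^ ((1:ℝ)/2))⁻¹
          ≤ t ^ (N - 1) * (t ^ α * (d/2) ^ ((1:ℝ)/2))⁻¹ :=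
            mul_le_mul_of_nonneg_left e2 (by positivity)
        _ = (t ^ ((N:ℝ) - 1) * (t ^ α)⁻¹) * (((d/2) ^ ((1:ℝ)/2))⁻¹) := by
            rw [ecast, mul_inv]; ring
        _ = t ^ (-1 - 2*s) * (((d/2) ^ ((1:ℝ)/2))⁻¹) := by
            rw [← Real.rpow_neg ht0.le α, ← Real.rpow_add ht0]
            congr 2
            rw [hα]; ring
        _ ≤ t ^ (-1 - 2*s) * (2 * d ^ (-((1:ℝ)/2))) := by
            apply mul_le_mul_of_nonneg_left (half_pow_inv_le hd) (Real.rpow_nonneg ht0.le _)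
        _ = 2 * d ^ (-((1:ℝ)/2)) * t ^ (-1 - 2*s) := by ring
    calc ∫⁻ t in Ioc (1:ℝ) (d/2), g t
        ≤ ∫⁻ t in Ioc (1:ℝ) (d/2),
            ENNReal.ofReal (2 * d ^ (-((1:ℝ)/2))) * ENNReal.ofReal (t ^ (-1 - 2*s)) :=
          setLIntegral_mono (by fun_prop) pw
      _ = ENNReal.ofReal (2 * d ^ (-((1:ℝ)/2))) *
            ∫⁻ t in Ioc (1:ℝ) (d/2), ENNReal.ofReal (t ^ (-1 - 2*s)) :=
          lintegral_const_mul' _ _ ENNReal.ofReal_ne_top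
      _ ≤ ENNReal.ofReal (2 * d ^ (-((1:ℝ)/2))) *
            ∫⁻ t in Ioi (1:ℝ), ENNReal.ofReal (t ^ (-1 - 2*s)) := by
          exact mul_le_mul_right (lintegral_mono_set Ioc_subset_Ioi_self) _
      _ = ENNReal.ofReal (2 * d ^ (-((1:ℝ)/2))) * ENNReal.ofReal (1/(2*s)) := by
          rw [lintegral_Ioi_rpow' (by linarith) one_pos]
          congr 1
          rw [Real.one_rpow]
          have h1 : -1 - 2*s + 1 = -(2*s) := by ring
          rw [h1, neg_div_neg_eq]
      _ = ENNReal.ofReal ((2 * d ^ (-((1:ℝ)/2))) * (1/(2*s))) :=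
          (ENNReal.ofReal_mul (by positivity)).symm
      _ = ENNReal.ofReal ((1/s) * d ^ (-((1:ℝ)/2))) := by
          congr 1
          field_simp
  -- piece on Ioc (d/2) d
  have hB3 : ∫⁻ t in Ioc (d/2) d, g t ≤ ENNReal.ofReal (2 ^ (α+1) * d ^ (-((1:ℝ)/2))) := by
    have pw : ∀ t ∈ Ioc (d/2) d, g t ≤
        ENNReal.ofReal (2 ^ α * d ^ (-1 - 2*s)) * ENNReal.ofReal (((d - t) ^ ((1:ℝ)/2))⁻¹) := by
      intro t ht
      have ht0 : (0:ℝ) < t := by linarith [ht.1]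
      by_cases htd : t < d
      · simp only [hg, if_pos htd]
        rw [← ENNReal.ofReal_mul (by positivity : (0:ℝ) ≤ t ^ (N - 1)),
          ← ENNReal.ofReal_mul (by positivity : (0:ℝ) ≤ 2 ^ α * d ^ (-1 - 2*s))]
        apply ENNReal.ofReal_le_ofReal
        have ecast : (t:ℝ) ^ (N - 1) = t ^ ((N:ℝ) - 1) := by
          rw [← Real.rpow_natCast t (N - 1), Nat.cast_sub hN, Nat.cast_one]
        have hdt : (0:ℝ) ≤ d - t := by linarith
        have e1 : t ^ (N-1) ≤ d ^ ((N:ℝ) - 1) := by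
          rw [ecast]
          exact Real.rpow_le_rpow ht0.le ht.2 (by linarith)
        have e2 : (1 + t ^ α)⁻¹ ≤ ((d/2) ^ α)⁻¹ := by
          apply inv_anti₀ (by positivity)
          have : ((d/2:ℝ)) ^ α ≤ t ^ α := Real.rpow_le_rpow (by linarith) ht.1.le hα0
          nlinarith
        have e3 : ((d/2:ℝ)) ^ α = d ^ α * (2:ℝ) ^ (-α) := by
          rw [div_eq_mul_inv, Real.mul_rpow hd0.le (by norm_num),
            Real.inv_rpow (by norm_num : (0:ℝ) ≤ 2), ← Real.rpow_neg (by norm_num : (0:ℝ) ≤ 2)]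
        have e4 : d ^ ((N:ℝ) - 1) * ((d/2) ^ α)⁻¹ = 2 ^ α * d ^ (-1 - 2*s) := by
          rw [e3, mul_inv, ← Real.rpow_neg hd0.le, ← Real.rpow_neg (by norm_num : (0:ℝ) ≤ 2),
            neg_neg, ← mul_assoc, ← Real.rpow_add hd0, mul_comm]
          congr 2
          rw [hα]; ring
        calc t ^ (N - 1) * ((1 + t ^ α) * (d - t) ^ ((1:ℝ)/2))⁻¹
            = t ^ (N - 1) * ((1 + t ^ α)⁻¹ * ((d - t) ^ ((1:ℝ)/2))⁻¹) := by rw [mul_inv]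
          _ ≤ d ^ ((N:ℝ) - 1) * (((d/2) ^ α)⁻¹ * ((d - t) ^ ((1:ℝ)/2))⁻¹) := by
              apply mul_le_mul e1 (mul_le_mul_of_nonneg_right e2 (by positivity))
                (by positivity) (by positivity)
          _ = (d ^ ((N:ℝ) - 1) * ((d/2) ^ α)⁻¹) * ((d - t) ^ ((1:ℝ)/2))⁻¹ := by ring
          _ = 2 ^ α * d ^ (-1 - 2*s) * ((d - t) ^ ((1:ℝ)/2))⁻¹ := by rw [e4]
      · simp only [hg, if_neg htd, mul_zero]
        exact zero_le
    calc ∫⁻ t in Ioc (d/2) d, g t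
        ≤ ∫⁻ t in Ioc (d/2) d,
            ENNReal.ofReal (2 ^ α * d ^ (-1 - 2*s)) *
              ENNReal.ofReal (((d - t) ^ ((1:ℝ)/2))⁻¹) :=
          setLIntegral_mono (by fun_prop) pw
      _ = ENNReal.ofReal (2 ^ α * d ^ (-1 - 2*s)) *
            ∫⁻ t in Ioc (d/2) d, ENNReal.ofReal (((d - t) ^ ((1:ℝ)/2))⁻¹) :=
          lintegral_const_mul' _ _ ENNReal.ofReal_ne_top
      _ = ENNReal.ofReal (2 ^ α * d ^ (-1 - 2*s)) * ENNReal.ofReal (2 * (d/2) ^ ((1:ℝ)/2)) := by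
          have hset : Ioc (d/2) d = Ioc (d - d/2) d := by congr 1; ring
          rw [hset, lintegral_sqrt_inv_left (by linarith : (0:ℝ) ≤ d/2)]
      _ ≤ ENNReal.ofReal (2 ^ (α+1) * d ^ (-((1:ℝ)/2))) := by
          rw [← ENNReal.ofReal_mul (by positivity)]
          apply ENNReal.ofReal_le_ofReal
          have h1 : ((d/2:ℝ)) ^ ((1:ℝ)/2) ≤ d ^ ((1:ℝ)/2) :=
            Real.rpow_le_rpow (by linarith) (by linarith) (by norm_num)
          calc 2 ^ α * d ^ (-1 - 2*s) * (2 * (d/2) ^ ((1:ℝ)/2))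
              ≤ 2 ^ α * d ^ (-1 - 2*s) * (2 * d ^ ((1:ℝ)/2)) := by
                apply mul_le_mul_of_nonneg_left (by linarith) (by positivity)
            _ = (2 ^ α * 2) * (d ^ (-1 - 2*s) * d ^ ((1:ℝ)/2)) := by ring
            _ = 2 ^ (α+1) * d ^ (-1 - 2*s + 1/2) := by
                rw [← Real.rpow_add_one (by norm_num : (2:ℝ) ≠ 0), ← Real.rpow_add hd0]
            _ ≤ 2 ^ (α+1) * d ^ (-((1:ℝ)/2)) := by
                apply mul_le_mul_of_nonneg_left
                  (Real.rpow_le_rpow_of_exponent_le hd1 (by linarith)) (by positivity)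
  rw [hz, add_zero]
  calc (∫⁻ t in Ioc (0:ℝ) 1, g t) + (∫⁻ t in Ioc (1:ℝ) (d/2), g t) +
        (∫⁻ t in Ioc (d/2) d, g t)
      ≤ ENNReal.ofReal (2 * d ^ (-((1:ℝ)/2))) + ENNReal.ofReal ((1/s) * d ^ (-((1:ℝ)/2))) +
          ENNReal.ofReal (2 ^ (α+1) * d ^ (-((1:ℝ)/2))) :=
        add_le_add (add_le_add hB1 hB2) hB3
    _ = ENNReal.ofReal ((2 + 1/s + 2 ^ (α + 1)) * d ^ (-((1:ℝ)/2))) := by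
        rw [← ENNReal.ofReal_add (by positivity) (by positivity),
          ← ENNReal.ofReal_add (by positivity) (by positivity)]
        congr 1
        ring
lemma Qbound (N : ℕ) (hN : 1 ≤ N) {s α : ℝ} (hs0 : 0 < s) (hα : α = N + 2*s)
    {d : ℝ} (hd : 2 ≤ d) :
    ∫⁻ r in Ioi (0:ℝ), ENNReal.ofReal (r ^ (N - 1)) *
        (if d ≤ r then ENNReal.ofReal ((r ^ (2*α - 1) * (r - d) ^ ((1:ℝ)/2))⁻¹) else 0) ≤
      ENNReal.ofReal ((2 + 2/(2*α - N - 1/2)) * d ^ ((N:ℝ) - 2*α + 1/2)) := by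
  have hd0 : (0:ℝ) < d := by linarith
  have hd1 : (1:ℝ) ≤ d := by linarith
  have hNr : (1:ℝ) ≤ (N:ℝ) := by exact_mod_cast hN
  have hα1 : (1:ℝ) ≤ α := by rw [hα]; linarith
  have hexp : (N:ℝ) - 2*α ≤ 0 := by rw [hα]; linarith
  have hc3 : (0:ℝ) < 2*α - N - 1/2 := by rw [hα]; push_cast; linarith
  set g : ℝ → ℝ≥0∞ := fun r => ENNReal.ofReal (r ^ (N - 1)) *
      (if d ≤ r then ENNReal.ofReal ((r ^ (2*α - 1) * (r - d) ^ ((1:ℝ)/2))⁻¹) else 0) with hg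
  have hsplit1 : Ioi (0:ℝ) = Ioc 0 d ∪ Ioi d := (Ioc_union_Ioi_eq_Ioi hd0.le).symm
  have hsplit2 : Ioi (d:ℝ) = Ioc d (d + d) ∪ Ioi (d + d) :=
    (Ioc_union_Ioi_eq_Ioi (by linarith)).symm
  have hdisj1 : Disjoint (Ioc (0:ℝ) d) (Ioi d) := by
    rw [Set.disjoint_left]; rintro x ⟨_, h1⟩ h2; exact absurd h2 (not_lt.2 h1)
  have hdisj2 : Disjoint (Ioc (d:ℝ) (d + d)) (Ioi (d + d)) := by
    rw [Set.disjoint_left]; rintro x ⟨_, h1⟩ h2; exact absurd h2 (not_lt.2 h1)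
  rw [hsplit1, lintegral_union measurableSet_Ioi hdisj1, hsplit2,
    lintegral_union measurableSet_Ioi hdisj2]
  -- first piece is zero
  have hz : ∫⁻ r in Ioc (0:ℝ) d, g r = 0 := by
    have : ∫⁻ r in Ioc (0:ℝ) d, g r = ∫⁻ r in Ioc (0:ℝ) d, 0 := by
      refine setLIntegral_congr_fun measurableSet_Ioc (fun r hr => ?_)
      by_cases h : d ≤ r
      · have hrd : r = d := le_antisymm hr.2 h
        simp only [hg, if_pos h, hrd, sub_self]
        rw [Real.zero_rpow (by norm_num : (1:ℝ)/2 ≠ 0)]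
        simp
      · simp only [hg, if_neg h, mul_zero]
    rw [this, lintegral_zero]
  -- middle piece
  have hB1 : ∫⁻ r in Ioc d (d + d), g r ≤
      ENNReal.ofReal (2 * d ^ ((N:ℝ) - 2*α + 1/2)) := by
    have pw : ∀ r ∈ Ioc d (d + d), g r ≤
        ENNReal.ofReal (d ^ ((N:ℝ) - 2*α)) * ENNReal.ofReal (((r - d) ^ ((1:ℝ)/2))⁻¹) := by
      intro r hr
      have hr0 : (0:ℝ) < r := hd0.trans hr.1
      have hrd : (0:ℝ) ≤ r - d := by linarith [hr.1]
      simp only [hg, if_pos hr.1.le]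
      rw [← ENNReal.ofReal_mul (by positivity : (0:ℝ) ≤ r ^ (N - 1)),
        ← ENNReal.ofReal_mul (by positivity : (0:ℝ) ≤ d ^ ((N:ℝ) - 2*α))]
      apply ENNReal.ofReal_le_ofReal
      have ecast : (r:ℝ) ^ (N - 1) = r ^ ((N:ℝ) - 1) := by
        rw [← Real.rpow_natCast r (N - 1), Nat.cast_sub hN, Nat.cast_one]
      have e1 : r ^ (N - 1) * (r ^ (2*α - 1))⁻¹ = r ^ ((N:ℝ) - 2*α) := by
        rw [ecast, ← Real.rpow_neg hr0.le, ← Real.rpow_add hr0]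
        congr 1
        ring
      have e2 : r ^ ((N:ℝ) - 2*α) ≤ d ^ ((N:ℝ) - 2*α) :=
        Real.rpow_le_rpow_of_nonpos hd0 hr.1.le hexp
      calc r ^ (N - 1) * (r ^ (2*α - 1) * (r - d) ^ ((1:ℝ)/2))⁻¹
          = (r ^ (N - 1) * (r ^ (2*α - 1))⁻¹) * ((r - d) ^ ((1:ℝ)/2))⁻¹ := by
            rw [mul_inv]; ring
        _ = r ^ ((N:ℝ) - 2*α) * ((r - d) ^ ((1:ℝ)/2))⁻¹ := by rw [e1]
        _ ≤ d ^ ((N:ℝ) - 2*α) * ((r - d) ^ ((1:ℝ)/2))⁻¹ :=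
            mul_le_mul_of_nonneg_right e2 (by positivity)
    calc ∫⁻ r in Ioc d (d + d), g r
        ≤ ∫⁻ r in Ioc d (d + d),
            ENNReal.ofReal (d ^ ((N:ℝ) - 2*α)) * ENNReal.ofReal (((r - d) ^ ((1:ℝ)/2))⁻¹) :=
          setLIntegral_mono (by fun_prop) pw
      _ = ENNReal.ofReal (d ^ ((N:ℝ) - 2*α)) *
            ∫⁻ r in Ioc d (d + d), ENNReal.ofReal (((r - d) ^ ((1:ℝ)/2))⁻¹) :=
          lintegral_const_mul' _ _ ENNReal.ofReal_ne_top
      _ = ENNReal.ofReal (d ^ ((N:ℝ) - 2*α)) * ENNReal.ofReal (2 * d ^ ((1:ℝ)/2)) := by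
          rw [lintegral_sqrt_inv hd0.le]
      _ ≤ ENNReal.ofReal (2 * d ^ ((N:ℝ) - 2*α + 1/2)) := by
          rw [← ENNReal.ofReal_mul (by positivity)]
          apply ENNReal.ofReal_le_ofReal
          rw [Real.rpow_add hd0]
          ring_nf
          exact le_refl _
  -- outer piece
  have hB2 : ∫⁻ r in Ioi (d + d), g r ≤
      ENNReal.ofReal ((2/(2*α - N - 1/2)) * d ^ ((N:ℝ) - 2*α + 1/2)) := by
    have pw : ∀ r ∈ Ioi (d + d), g r ≤
        ENNReal.ofReal ((2:ℝ) ^ ((1:ℝ)/2)) * ENNReal.ofReal (r ^ ((N:ℝ) - 2*α - 1/2)) := by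
      intro r hr
      have hr' : d + d < r := hr
      have hr0 : (0:ℝ) < r := by linarith
      have hdr : d ≤ r := by linarith
      simp only [hg, if_pos hdr]
      rw [← ENNReal.ofReal_mul (by positivity : (0:ℝ) ≤ r ^ (N - 1)),
        ← ENNReal.ofReal_mul (by positivity : (0:ℝ) ≤ (2:ℝ) ^ ((1:ℝ)/2))]
      apply ENNReal.ofReal_le_ofReal
      have ecast : (r:ℝ) ^ (N - 1) = r ^ ((N:ℝ) - 1) := by
        rw [← Real.rpow_natCast r (N - 1), Nat.cast_sub hN, Nat.cast_one]
      have e1 : r ^ (N - 1) * (r ^ (2*α - 1))⁻¹ = r ^ ((N:ℝ) - 2*α) := by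
        rw [ecast, ← Real.rpow_neg hr0.le, ← Real.rpow_add hr0]
        congr 1
        ring
      have e2 : ((r - d) ^ ((1:ℝ)/2))⁻¹ ≤ ((r/2) ^ ((1:ℝ)/2))⁻¹ := by
        apply inv_anti₀ (by positivity)
        exact Real.rpow_le_rpow (by positivity) (by linarith) (by norm_num)
      have e3 : ((r/2:ℝ) ^ ((1:ℝ)/2))⁻¹ = (2:ℝ) ^ ((1:ℝ)/2) * (r ^ ((1:ℝ)/2))⁻¹ := by
        rw [div_eq_mul_inv, Real.mul_rpow hr0.le (by norm_num),
          Real.inv_rpow (by norm_num : (0:ℝ) ≤ 2), mul_inv, inv_inv, mul_comm]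
      calc r ^ (N - 1) * (r ^ (2*α - 1) * (r - d) ^ ((1:ℝ)/2))⁻¹
          = (r ^ (N - 1) * (r ^ (2*α - 1))⁻¹) * ((r - d) ^ ((1:ℝ)/2))⁻¹ := by
            rw [mul_inv]; ring
        _ ≤ r ^ ((N:ℝ) - 2*α) * ((r/2) ^ ((1:ℝ)/2))⁻¹ := by
            rw [e1]
            exact mul_le_mul_of_nonneg_left e2 (Real.rpow_nonneg hr0.le _)
        _ = (2:ℝ) ^ ((1:ℝ)/2) * (r ^ ((N:ℝ) - 2*α) * (r ^ ((1:ℝ)/2))⁻¹) := by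
            rw [e3]; ring
        _ = (2:ℝ) ^ ((1:ℝ)/2) * r ^ ((N:ℝ) - 2*α - 1/2) := by
            rw [← Real.rpow_neg hr0.le, ← Real.rpow_add hr0, ← sub_eq_add_neg]
    calc ∫⁻ r in Ioi (d + d), g r
        ≤ ∫⁻ r in Ioi (d + d),
            ENNReal.ofReal ((2:ℝ) ^ ((1:ℝ)/2)) * ENNReal.ofReal (r ^ ((N:ℝ) - 2*α - 1/2)) :=
          setLIntegral_mono (by fun_prop) pw
      _ = ENNReal.ofReal ((2:ℝ) ^ ((1:ℝ)/2)) *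
            ∫⁻ r in Ioi (d + d), ENNReal.ofReal (r ^ ((N:ℝ) - 2*α - 1/2)) :=
          lintegral_const_mul' _ _ ENNReal.ofReal_ne_top
      _ = ENNReal.ofReal ((2:ℝ) ^ ((1:ℝ)/2)) *
            ENNReal.ofReal (-(d + d) ^ ((N:ℝ) - 2*α - 1/2 + 1) / ((N:ℝ) - 2*α - 1/2 + 1)) := by
          rw [lintegral_Ioi_rpow' (by rw [hα]; push_cast; linarith) (by linarith : (0:ℝ) < d + d)]
      _ ≤ ENNReal.ofReal ((2/(2*α - N - 1/2)) * d ^ ((N:ℝ) - 2*α + 1/2)) := by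
          rw [← ENNReal.ofReal_mul (by positivity)]
          apply ENNReal.ofReal_le_ofReal
          have h2 : (2:ℝ) ^ ((1:ℝ)/2) ≤ 2 := by
            have := Real.rpow_le_rpow_of_exponent_le (by norm_num : (1:ℝ) ≤ 2)
              (by norm_num : (1:ℝ)/2 ≤ 1)
            rwa [Real.rpow_one] at this
          have hq1 : (N:ℝ) - 2*α - 1/2 + 1 = -(2*α - N - 1/2) := by ring
          rw [hq1, neg_div_neg_eq]
          have h3 : (d + d) ^ (-(2*α - (N:ℝ) - 1/2)) ≤ d ^ (-(2*α - (N:ℝ) - 1/2)) :=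
            Real.rpow_le_rpow_of_nonpos hd0 (by linarith) (by linarith)
          have h4 : d ^ (-(2*α - (N:ℝ) - 1/2)) = d ^ ((N:ℝ) - 2*α + 1/2) := by
            congr 1
            ring
          calc (2:ℝ) ^ ((1:ℝ)/2) * ((d + d) ^ (-(2*α - (N:ℝ) - 1/2)) / (2*α - N - 1/2))
              ≤ 2 * (d ^ (-(2*α - (N:ℝ) - 1/2)) / (2*α - N - 1/2)) := by
                apply mul_le_mul h2 _ (by positivity) (by norm_num)
                gcongr
            _ = (2/(2*α - N - 1/2)) * d ^ ((N:ℝ) - 2*α + 1/2) := by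
                rw [h4]; ring
  rw [hz, zero_add]
  calc (∫⁻ r in Ioc d (d + d), g r) + (∫⁻ r in Ioi (d + d), g r)
      ≤ ENNReal.ofReal (2 * d ^ ((N:ℝ) - 2*α + 1/2)) +
          ENNReal.ofReal ((2/(2*α - N - 1/2)) * d ^ ((N:ℝ) - 2*α + 1/2)) :=
        add_le_add hB1 hB2
    _ = ENNReal.ofReal ((2 + 2/(2*α - N - 1/2)) * d ^ ((N:ℝ) - 2*α + 1/2)) := by
        rw [← ENNReal.ofReal_add (by positivity) (by positivity)]
        congr 1
        ring


local notation "dim" => Module.finrank ℝ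

lemma lintegral_fun_norm_addHaar' {E : Type*} [NormedAddCommGroup E] [NormedSpace ℝ E]
    [MeasurableSpace E] [BorelSpace E] [FiniteDimensional ℝ E] [Nontrivial E]
    (μ : Measure E) [μ.IsAddHaarMeasure] {f : ℝ → ENNReal} (hf : Measurable f) :
    ∫⁻ x, f ‖x‖ ∂μ =
      (dim E) * μ (ball 0 1) * ∫⁻ y in Ioi (0:ℝ), ENNReal.ofReal (y ^ (dim E - 1)) * f y := by
  have h1 := lintegral_subtype_comap (μ := μ) (measurableSet_singleton (0:E)).compl
    (fun x : E => f ‖x‖)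
  rw [MeasureTheory.restrict_compl_singleton] at h1
  rw [← h1]
  have h2 : ∫⁻ x : ({(0:E)}ᶜ : Set E), f ‖x.1‖ ∂(Measure.comap Subtype.val μ) =
      ∫⁻ p : sphere (0:E) 1 × Ioi (0:ℝ), f p.2
        ∂(μ.toSphere.prod (Measure.volumeIoiPow (dim E - 1))) := by
    have := μ.measurePreserving_homeomorphUnitSphereProd.lintegral_comp
      ((hf.comp measurable_subtype_coe).comp measurable_snd)
    simpa only [Function.comp_def, homeomorphUnitSphereProd_apply_snd_coe] using this
  rw [h2, lintegral_prod _ (Measurable.aemeasurable (by fun_prop))]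
  simp only [lintegral_const]
  rw [Measure.toSphere_apply_univ, Measure.volumeIoiPow,
    lintegral_withDensity_eq_lintegral_mul (g := fun y : Ioi (0:ℝ) => f y.1) _
      ((measurable_subtype_coe.pow_const _).ennreal_ofReal)
      (hf.comp measurable_subtype_coe)]
  have h3 := lintegral_subtype_comap (μ := (volume : Measure ℝ)) (measurableSet_Ioi (a := (0:ℝ)))
    (fun y : ℝ => ENNReal.ofReal (y ^ (dim E - 1)) * f y)
  rw [Pi.mul_def] at *
  rw [h3.symm]
  ring

lemma key_pointwise {α d r t : ℝ} (hα : 1 ≤ α) (hd : 0 < d) (hr : d < r) (ht0 : 0 ≤ t)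
    (htd : t < d) :
    ((1 + r ^ α) * (1 + t ^ α) * (r ^ α - t ^ α))⁻¹ ≤
      (r ^ (2 * α - 1) * (r - d) ^ ((1:ℝ)/2))⁻¹ * ((1 + t ^ α) * (d - t) ^ ((1:ℝ)/2))⁻¹ := by
  have hr0 : (0:ℝ) < r := hd.trans hr
  have htr : t < r := htd.trans hr
  have hrd : (0:ℝ) ≤ r - d := by linarith
  have hdt : (0:ℝ) ≤ d - t := by linarith
  have htα : (0:ℝ) ≤ t ^ α := Real.rpow_nonneg ht0 α
  -- step 1
  have e1 : (r - d) ^ ((1:ℝ)/2) * (d - t) ^ ((1:ℝ)/2) ≤ r - t := by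
    rw [← Real.mul_rpow hrd hdt, ← Real.sqrt_eq_rpow]
    calc Real.sqrt ((r - d) * (d - t)) ≤ Real.sqrt ((r - t) ^ 2) :=
          Real.sqrt_le_sqrt (by nlinarith)
      _ = r - t := by rw [Real.sqrt_sq_eq_abs]; rw [abs_of_nonneg (by linarith)]
  -- step 2
  have e2 : t ^ α ≤ r ^ (α - 1) * t := by
    rcases eq_or_lt_of_le ht0 with h | h
    · rw [← h, Real.zero_rpow (by linarith), mul_zero]
    · calc t ^ α = t ^ (α - 1) * t := by
            rw [← Real.rpow_add_one h.ne' (α - 1)]; ring_nf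
        _ ≤ r ^ (α - 1) * t :=
            mul_le_mul_of_nonneg_right
              (Real.rpow_le_rpow ht0 htr.le (by linarith)) ht0
  -- step 3
  have e3 : r ^ (α - 1) * (r - t) ≤ r ^ α - t ^ α := by
    have : r ^ (α - 1) * r = r ^ α := by
      rw [← Real.rpow_add_one hr0.ne' (α - 1)]; ring_nf
    nlinarith [e2]
  -- denominators
  have hpow : r ^ (2 * α - 1) = r ^ α * r ^ (α - 1) := by
    rw [← Real.rpow_add hr0]; ring_nf
  have eD : r ^ (2 * α - 1) * (r - d) ^ ((1:ℝ)/2) * ((1 + t ^ α) * (d - t) ^ ((1:ℝ)/2)) ≤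
      (1 + r ^ α) * (1 + t ^ α) * (r ^ α - t ^ α) := by
    have h4 : r ^ (α - 1) * ((r - d) ^ ((1:ℝ)/2) * (d - t) ^ ((1:ℝ)/2)) ≤ r ^ α - t ^ α := by
      calc r ^ (α - 1) * ((r - d) ^ ((1:ℝ)/2) * (d - t) ^ ((1:ℝ)/2)) ≤ r ^ (α - 1) * (r - t) :=
            mul_le_mul_of_nonneg_left e1 (Real.rpow_nonneg hr0.le _)
        _ ≤ r ^ α - t ^ α := e3
    calc r ^ (2 * α - 1) * (r - d) ^ ((1:ℝ)/2) * ((1 + t ^ α) * (d - t) ^ ((1:ℝ)/2))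
        = (r ^ α * (1 + t ^ α)) * (r ^ (α - 1) * ((r - d) ^ ((1:ℝ)/2) * (d - t) ^ ((1:ℝ)/2))) := by
          rw [hpow]; ring
      _ ≤ ((1 + r ^ α) * (1 + t ^ α)) * (r ^ α - t ^ α) := by
          apply mul_le_mul _ h4 (by positivity) (by positivity)
          nlinarith [Real.rpow_nonneg hr0.le α]
  have hD2 : 0 < r ^ (2 * α - 1) * (r - d) ^ ((1:ℝ)/2) * ((1 + t ^ α) * (d - t) ^ ((1:ℝ)/2)) := by
    have h1 : (0:ℝ) < r - d := by linarith
    have h2 : (0:ℝ) < d - t := by linarith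
    positivity
  rw [← mul_inv]
  exact inv_anti₀ hD2 (by rw [mul_assoc] at eD ⊢; exact eD)

lemma integral_le_toReal_lintegral {X : Type*} [MeasurableSpace X] (mu : MeasureTheory.Measure X)
    {g : X -> Real} (hg : 0 ≤ᵐ[mu] g) :
    (∫ a, g a ∂mu) ≤ (∫⁻ a, ENNReal.ofReal (g a) ∂mu).toReal := by
  by_cases h : MeasureTheory.Integrable g mu
  · rw [← MeasureTheory.ofReal_integral_eq_lintegral_ofReal h hg,
      ENNReal.toReal_ofReal (MeasureTheory.integral_nonneg_of_ae hg)]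
  · rw [MeasureTheory.integral_undef h]; exact ENNReal.toReal_nonneg

lemma ofReal_integral_le_lintegral {X : Type*} [MeasurableSpace X] (mu : MeasureTheory.Measure X)
    {g : X -> Real} (hg : 0 ≤ᵐ[mu] g) :
    ENNReal.ofReal (∫ a, g a ∂mu) ≤ ∫⁻ a, ENNReal.ofReal (g a) ∂mu := by
  by_cases h : MeasureTheory.Integrable g mu
  · rw [← MeasureTheory.ofReal_integral_eq_lintegral_ofReal h hg]
  · rw [MeasureTheory.integral_undef h]; simp

/-- Weighted double-integral estimate giving the upper bound
`τ_{ε,ξ} ≤ c₂ ε^N (ε/d(ξ,∂Ω))^{N+4s}` in Lemma 4.2. -/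
theorem weighted_double_integral_upper_bound
    (N : ℕ) (hN : 1 ≤ N) (s : ℝ) (hs0 : 0 < s) (hs1 : s < 1)
    (hNs : 2 * s < (N : ℝ)) :
    ∃ C : ℝ, 0 < C ∧
      ∀ d : ℝ, 2 ≤ d →
        (∫ x in (ball (0 : EuclideanSpace ℝ (Fin N)) d)ᶜ,
            ∫ y in ball (0 : EuclideanSpace ℝ (Fin N)) d,
              ((1 + ‖x‖ ^ ((N : ℝ) + 2 * s)) * (1 + ‖y‖ ^ ((N : ℝ) + 2 * s)) *
                (‖x‖ ^ ((N : ℝ) + 2 * s) - ‖y‖ ^ ((N : ℝ) + 2 * s)))⁻¹) ≤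
          C * d ^ (-((N : ℝ) + 4 * s)) := by
  haveI : Nonempty (Fin N) := ⟨⟨0, hN⟩⟩
  haveI : Nontrivial (EuclideanSpace ℝ (Fin N)) :=
    inferInstance
  set E := EuclideanSpace ℝ (Fin N) with hE
  set α : ℝ := (N : ℝ) + 2 * s with hα
  have hNr : (1:ℝ) ≤ (N:ℝ) := by exact_mod_cast hN
  have hα1 : (1:ℝ) ≤ α := by rw [hα]; linarith
  have hα0 : (0:ℝ) ≤ α := by linarith
  have hc3 : (0:ℝ) < 2*α - N - 1/2 := by rw [hα]; linarith
  -- constants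
  set κ : ℝ≥0∞ := ((N : ℕ) : ℝ≥0∞) * volume (ball (0:E) 1) with hκ
  have hκfin : κ ≠ ⊤ := ENNReal.mul_ne_top (ENNReal.natCast_ne_top N) measure_ball_lt_top.ne
  set k : ℝ := κ.toReal with hk
  have hκk : κ = ENNReal.ofReal k := by rw [hk, ENNReal.ofReal_toReal hκfin]
  set Mq : ℝ := 2 + 2/(2*α - N - 1/2) with hMq
  set Mp : ℝ := 2 + 1/s + 2 ^ (α + 1) with hMp
  have hMq0 : 0 < Mq := by
    have := div_pos (by norm_num : (0:ℝ) < 2) hc3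
    rw [hMq]; linarith
  have hMp0 : 0 < Mp := by
    have h1 : (0:ℝ) < 1/s := by positivity
    have h2 : (0:ℝ) < (2:ℝ) ^ (α + 1) := Real.rpow_pos_of_pos (by norm_num) _
    rw [hMp]; linarith
  set M : ℝ := k^2 * Mq * Mp with hM
  have hM0 : 0 ≤ M := by
    rw [hM]
    exact mul_nonneg (mul_nonneg (sq_nonneg k) hMq0.le) hMp0.le
  refine ⟨M + 1, by linarith, fun d hd => ?_⟩
  have hd0 : (0:ℝ) < d := by linarith
  -- the inner integral and its lintegral bound
  set B := ball (0:E) d with hB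
  have hmemc : ∀ x : E, x ∈ Bᶜ ↔ d ≤ ‖x‖ := fun x => by
    rw [hB, mem_compl_iff, mem_ball_zero_iff, not_lt]
  have hFnn : ∀ x : E, d ≤ ‖x‖ → ∀ y : E, y ∈ B →
      (0:ℝ) ≤ ((1 + ‖x‖ ^ α) * (1 + ‖y‖ ^ α) * (‖x‖ ^ α - ‖y‖ ^ α))⁻¹ := by
    intro x hx y hy
    have h1 : ‖y‖ ^ α ≤ ‖x‖ ^ α :=
      Real.rpow_le_rpow (norm_nonneg y) (le_trans (mem_ball_zero_iff.1 hy).le hx) hα0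
    have h2 : (0:ℝ) ≤ ‖x‖ ^ α := Real.rpow_nonneg (norm_nonneg x) α
    have h3 : (0:ℝ) ≤ ‖y‖ ^ α := Real.rpow_nonneg (norm_nonneg y) α
    apply inv_nonneg.2
    apply mul_nonneg (mul_nonneg (by linarith) (by linarith)) (by linarith)
  -- define P and Q
  set P : ℝ≥0∞ := ∫⁻ y in B, ENNReal.ofReal (((1 + ‖y‖ ^ α) * (d - ‖y‖) ^ ((1:ℝ)/2))⁻¹)
    with hP
  set Q : ℝ≥0∞ := ∫⁻ x in Bᶜ,
      ENNReal.ofReal ((‖x‖ ^ (2*α - 1) * (‖x‖ - d) ^ ((1:ℝ)/2))⁻¹) with hQ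
  -- radial computation for P
  have hPrad : P = κ * ∫⁻ t in Ioi (0:ℝ), ENNReal.ofReal (t ^ (N - 1)) *
      (if t < d then ENNReal.ofReal (((1 + t ^ α) * (d - t) ^ ((1:ℝ)/2))⁻¹) else 0) := by
    have hmeas : Measurable (fun u : ℝ =>
        if u < d then ENNReal.ofReal (((1 + u ^ α) * (d - u) ^ ((1:ℝ)/2))⁻¹) else 0) := by
      exact Measurable.ite measurableSet_Iio (by fun_prop) measurable_const
    have h1 : P = ∫⁻ y : E,
        (if ‖y‖ < d then ENNReal.ofReal (((1 + ‖y‖ ^ α) * (d - ‖y‖) ^ ((1:ℝ)/2))⁻¹) else 0) := by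
      rw [hP, ← lintegral_indicator measurableSet_ball]
      refine lintegral_congr fun y => ?_
      by_cases h : y ∈ B
      · rw [Set.indicator_of_mem h, if_pos (mem_ball_zero_iff.1 h)]
      · rw [Set.indicator_of_notMem h, if_neg fun hlt => h (mem_ball_zero_iff.2 hlt)]
    rw [h1, lintegral_fun_norm_addHaar' volume hmeas, finrank_euclideanSpace_fin]
  have hPle : P ≤ κ * ENNReal.ofReal (Mp * d ^ (-((1:ℝ)/2))) := by
    rw [hPrad, hMp]
    exact mul_le_mul_right (Pbound N hN hs0 hα hd) κ
  have hPfin : P ≠ ⊤ :=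
    (hPle.trans_lt (ENNReal.mul_lt_top hκfin.lt_top ENNReal.ofReal_lt_top)).ne
  -- radial computation for Q
  have hQrad : Q = κ * ∫⁻ t in Ioi (0:ℝ), ENNReal.ofReal (t ^ (N - 1)) *
      (if d ≤ t then ENNReal.ofReal ((t ^ (2*α - 1) * (t - d) ^ ((1:ℝ)/2))⁻¹) else 0) := by
    have hmeas : Measurable (fun u : ℝ =>
        if d ≤ u then ENNReal.ofReal ((u ^ (2*α - 1) * (u - d) ^ ((1:ℝ)/2))⁻¹) else 0) := by
      exact Measurable.ite measurableSet_Ici (by fun_prop) measurable_const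
    have h1 : Q = ∫⁻ x : E,
        (if d ≤ ‖x‖ then ENNReal.ofReal ((‖x‖ ^ (2*α - 1) * (‖x‖ - d) ^ ((1:ℝ)/2))⁻¹) else 0) := by
      rw [hQ, ← lintegral_indicator measurableSet_ball.compl]
      refine lintegral_congr fun x => ?_
      by_cases h : x ∈ Bᶜ
      · rw [Set.indicator_of_mem h, if_pos ((hmemc x).1 h)]
      · rw [Set.indicator_of_notMem h, if_neg fun hle => h ((hmemc x).2 hle)]
    rw [h1, lintegral_fun_norm_addHaar' volume hmeas, finrank_euclideanSpace_fin]
  have hQle : Q ≤ κ * ENNReal.ofReal (Mq * d ^ ((N:ℝ) - 2*α + 1/2)) := by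
    rw [hQrad, hMq]
    exact mul_le_mul_right (Qbound N hN hs0 hα hd) κ
  -- pointwise domination of the inner integral
  have hsphere : ∀ᵐ x : E ∂volume, x ∉ sphere (0:E) d :=
    measure_eq_zero_iff_ae_notMem.1 (Measure.addHaar_sphere volume 0 d)
  have hstep : ∀ᵐ x ∂(volume.restrict Bᶜ),
      ENNReal.ofReal (∫ y in B,
          ((1 + ‖x‖ ^ α) * (1 + ‖y‖ ^ α) * (‖x‖ ^ α - ‖y‖ ^ α))⁻¹) ≤
        ENNReal.ofReal ((‖x‖ ^ (2*α - 1) * (‖x‖ - d) ^ ((1:ℝ)/2))⁻¹) * P := by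
    filter_upwards [ae_restrict_mem measurableSet_ball.compl, ae_restrict_of_ae hsphere]
      with x hx hxs
    have hdx : d < ‖x‖ := by
      rcases lt_or_eq_of_le ((hmemc x).1 hx) with h | h
      · exact h
      · exact absurd (mem_sphere_zero_iff_norm.2 h.symm) hxs
    have hφ0 : (0:ℝ) ≤ (‖x‖ ^ (2*α - 1) * (‖x‖ - d) ^ ((1:ℝ)/2))⁻¹ := by
      apply inv_nonneg.2
      exact mul_nonneg (Real.rpow_nonneg (norm_nonneg x) _)
        (Real.rpow_nonneg (by linarith) _)
    calc ENNReal.ofReal (∫ y in B,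
            ((1 + ‖x‖ ^ α) * (1 + ‖y‖ ^ α) * (‖x‖ ^ α - ‖y‖ ^ α))⁻¹)
        ≤ ∫⁻ y in B, ENNReal.ofReal
            (((1 + ‖x‖ ^ α) * (1 + ‖y‖ ^ α) * (‖x‖ ^ α - ‖y‖ ^ α))⁻¹) := by
          apply ofReal_integral_le_lintegral
          exact (ae_restrict_iff' measurableSet_ball).2
            (ae_of_all _ fun y hy => hFnn x ((hmemc x).1 hx) y hy)
      _ ≤ ∫⁻ y in B, ENNReal.ofReal
            ((‖x‖ ^ (2*α - 1) * (‖x‖ - d) ^ ((1:ℝ)/2))⁻¹ *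
              ((1 + ‖y‖ ^ α) * (d - ‖y‖) ^ ((1:ℝ)/2))⁻¹) := by
          apply lintegral_mono_ae
          filter_upwards [ae_restrict_mem measurableSet_ball] with y hy
          exact ENNReal.ofReal_le_ofReal
            (key_pointwise hα1 hd0 hdx (norm_nonneg y) (mem_ball_zero_iff.1 hy))
      _ = ∫⁻ y in B, ENNReal.ofReal ((‖x‖ ^ (2*α - 1) * (‖x‖ - d) ^ ((1:ℝ)/2))⁻¹) *
            ENNReal.ofReal (((1 + ‖y‖ ^ α) * (d - ‖y‖) ^ ((1:ℝ)/2))⁻¹) :=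
          lintegral_congr fun y => ENNReal.ofReal_mul hφ0
      _ = ENNReal.ofReal ((‖x‖ ^ (2*α - 1) * (‖x‖ - d) ^ ((1:ℝ)/2))⁻¹) * P := by
          rw [hP]
          exact lintegral_const_mul' _ _ ENNReal.ofReal_ne_top
  -- main chain
  have hmain : ∫⁻ x in Bᶜ, ENNReal.ofReal (∫ y in B,
      ((1 + ‖x‖ ^ α) * (1 + ‖y‖ ^ α) * (‖x‖ ^ α - ‖y‖ ^ α))⁻¹) ≤
      ENNReal.ofReal ((M) * d ^ (-((N:ℝ) + 4*s))) := by
    calc ∫⁻ x in Bᶜ, ENNReal.ofReal (∫ y in B,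
          ((1 + ‖x‖ ^ α) * (1 + ‖y‖ ^ α) * (‖x‖ ^ α - ‖y‖ ^ α))⁻¹)
        ≤ ∫⁻ x in Bᶜ,
            ENNReal.ofReal ((‖x‖ ^ (2*α - 1) * (‖x‖ - d) ^ ((1:ℝ)/2))⁻¹) * P :=
          lintegral_mono_ae hstep
      _ = Q * P := lintegral_mul_const' P _ hPfin
      _ ≤ (κ * ENNReal.ofReal (Mq * d ^ ((N:ℝ) - 2*α + 1/2))) *
            (κ * ENNReal.ofReal (Mp * d ^ (-((1:ℝ)/2)))) := mul_le_mul' hQle hPle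
      _ = ENNReal.ofReal ((k * (Mq * d ^ ((N:ℝ) - 2*α + 1/2))) *
            (k * (Mp * d ^ (-((1:ℝ)/2))))) := by
          rw [hκk, ← ENNReal.ofReal_mul ENNReal.toReal_nonneg,
            ← ENNReal.ofReal_mul ENNReal.toReal_nonneg, ← ENNReal.ofReal_mul (by positivity)]
      _ = ENNReal.ofReal (M * d ^ (-((N:ℝ) + 4*s))) := by
          congr 1
          have h1 : d ^ ((N:ℝ) - 2*α + 1/2) * d ^ (-((1:ℝ)/2)) = d ^ (-((N:ℝ) + 4*s)) := by
            rw [← Real.rpow_add hd0]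
            congr 1
            rw [hα]; ring
          calc (k * (Mq * d ^ ((N:ℝ) - 2*α + 1/2))) * (k * (Mp * d ^ (-((1:ℝ)/2))))
              = (k^2 * Mq * Mp) * (d ^ ((N:ℝ) - 2*α + 1/2) * d ^ (-((1:ℝ)/2))) := by ring
            _ = M * d ^ (-((N:ℝ) + 4*s)) := by rw [h1, hM]
  -- from lintegral bound to the Bochner integral bound
  calc (∫ x in Bᶜ, ∫ y in B,
        ((1 + ‖x‖ ^ α) * (1 + ‖y‖ ^ α) * (‖x‖ ^ α - ‖y‖ ^ α))⁻¹)
      ≤ (∫⁻ x in Bᶜ, ENNReal.ofReal (∫ y in B,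
          ((1 + ‖x‖ ^ α) * (1 + ‖y‖ ^ α) * (‖x‖ ^ α - ‖y‖ ^ α))⁻¹)).toReal := by
        apply integral_le_toReal_lintegral
        exact (ae_restrict_iff' measurableSet_ball.compl).2 (ae_of_all _ fun x hx =>
          setIntegral_nonneg measurableSet_ball fun y hy => hFnn x ((hmemc x).1 hx) y hy)
    _ ≤ (ENNReal.ofReal (M * d ^ (-((N:ℝ) + 4*s)))).toReal :=
        ENNReal.toReal_mono ENNReal.ofReal_ne_top hmain
    _ = M * d ^ (-((N:ℝ) + 4*s)) := ENNReal.toReal_ofReal (by positivity)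
    _ ≤ (M + 1) * d ^ (-((N:ℝ) + 4*s)) := by
        apply mul_le_mul_of_nonneg_right (by linarith) (Real.rpow_nonneg hd0.le _)
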